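/- Let A be a linear relation from H to K_A and B a linear relation from H to K_B, and suppose there is a contraction C : K_B → K_A with C B ⊆ A. Then the regular parts satisfy [(I − P_A) C] B_reg ⊆ A_reg, where P_A is the orthogonal projection of K_A onto mul A**; in particular A_reg is contractively dominated by B_reg. -/

import Mathlib

/-- `I - P` is contractive when `P` is an orthogonal projection. -/
lemma sub_proj_norm_le {K : Type*} [NormedAddCommGroup K] [InnerProductSpace ℂ K]
    {M : Submodule ℂ K} {P : K →L[ℂ] K} (hP : ∀ k : K, P k ∈ M ∧ k - P k ∈ Mᗮ)
    (k : K) : ‖k - P k‖ ≤ ‖k‖ := by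
  have horth : (inner ℂ (P k) (k - P k) : ℂ) = 0 :=
    (Submodule.mem_orthogonal M (k - P k)).1 (hP k).2 (P k) (hP k).1
  have hsum : P k + (k - P k) = k := by abel
  have h2 := norm_add_sq_eq_norm_sq_add_norm_sq_of_inner_eq_zero _ _ horth
  rw [hsum] at h2
  nlinarith [norm_nonneg (P k), norm_nonneg k, norm_nonneg (k - P k)]

theorem regular_parts_domination
    {H KA KB : Type*} [NormedAddCommGroup H] [InnerProductSpace ℂ H] [CompleteSpace H]
    [NormedAddCommGroup KA] [InnerProductSpace ℂ KA] [CompleteSpace KA]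
    [NormedAddCommGroup KB] [InnerProductSpace ℂ KB] [CompleteSpace KB]
    (A : Submodule ℂ (H × KA)) (B : Submodule ℂ (H × KB))
    (C : KB →L[ℂ] KA) (hC : ‖C‖ ≤ 1)
    (hCB : ∀ p ∈ B, (p.1, C p.2) ∈ A)
    (MA : Submodule ℂ KA)
    (hMA : MA = Submodule.comap (LinearMap.inr ℂ H KA) A.topologicalClosure)
    (MB : Submodule ℂ KB)
    (hMB : MB = Submodule.comap (LinearMap.inr ℂ H KB) B.topologicalClosure)
    (PA : KA →L[ℂ] KA) (hPA : ∀ k : KA, PA k ∈ MA ∧ k - PA k ∈ MAᗮ)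
    (PB : KB →L[ℂ] KB) (hPB : ∀ k : KB, PB k ∈ MB ∧ k - PB k ∈ MBᗮ)
    (Areg : Submodule ℂ (H × KA))
    (hAreg : Areg = Submodule.map
      (LinearMap.prodMap (LinearMap.id : H →ₗ[ℂ] H)
        ((ContinuousLinearMap.id ℂ KA - PA) : KA →L[ℂ] KA).toLinearMap) A)
    (Breg : Submodule ℂ (H × KB))
    (hBreg : Breg = Submodule.map
      (LinearMap.prodMap (LinearMap.id : H →ₗ[ℂ] H)
        ((ContinuousLinearMap.id ℂ KB - PB) : KB →L[ℂ] KB).toLinearMap) B) :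
    (∀ q ∈ Breg, (q.1, C q.2 - PA (C q.2)) ∈ Areg) ∧
    (∃ C' : KB →L[ℂ] KA, ‖C'‖ ≤ 1 ∧ ∀ q ∈ Breg, (q.1, C' q.2) ∈ Areg) := by
  -- C maps MB into MA
  have hPAid : ∀ m ∈ MA, PA m = m := by
    intro m hm
    have h1 : m - PA m ∈ MA := Submodule.sub_mem MA hm (hPA m).1
    have h2 : m - PA m ∈ MAᗮ := (hPA m).2
    have : m - PA m = 0 := by
      have := Submodule.inner_right_of_mem_orthogonal h1 h2
      rwa [inner_self_eq_zero] at this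
    linear_combination (norm := module) -this
  have hCM : ∀ k ∈ MB, C k ∈ MA := by
    intro k hk
    rw [hMB, Submodule.mem_comap] at hk
    rw [hMA, Submodule.mem_comap]
    -- the continuous map (x,y) ↦ (x, C y) sends closure B into closure A
    set f : H × KB →L[ℂ] H × KA :=
      (ContinuousLinearMap.id ℂ H).prodMap C with hf
    have hle : B.topologicalClosure ≤
        Submodule.comap (f : H × KB →ₗ[ℂ] H × KA) A.topologicalClosure := by
      apply Submodule.topologicalClosure_minimal
      · intro p hp
        exact Submodule.le_topologicalClosure A (hCB p hp)
      · exact IsClosed.preimage f.continuous A.isClosed_topologicalClosure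
    exact hle hk
  have main : ∀ q ∈ Breg, (q.1, C q.2 - PA (C q.2)) ∈ Areg := by
    intro q hq
    rw [hBreg] at hq
    obtain ⟨p, hp, rfl⟩ := hq
    rw [hAreg]
    refine ⟨(p.1, C p.2), hCB p hp, ?_⟩
    have hPBm : C (PB p.2) ∈ MA := hCM _ (hPB p.2).1
    have hfix : PA (C (PB p.2)) = C (PB p.2) := hPAid _ hPBm
    have : C (p.2 - PB p.2) - PA (C (p.2 - PB p.2)) = C p.2 - PA (C p.2) := by
      simp only [map_sub, hfix]
      abel
    simp only [LinearMap.prodMap_apply, LinearMap.id_apply,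
      ContinuousLinearMap.coe_coe, ContinuousLinearMap.coe_sub',
      Pi.sub_apply, ContinuousLinearMap.id_apply, Prod.mk.injEq]
    exact ⟨trivial, by simpa using this.symm⟩
  refine ⟨main, ⟨(ContinuousLinearMap.id ℂ KA - PA).comp C, ?_, ?_⟩⟩
  · apply ContinuousLinearMap.opNorm_le_bound _ zero_le_one
    intro x
    rw [one_mul]
    calc ‖((ContinuousLinearMap.id ℂ KA - PA).comp C) x‖
        = ‖C x - PA (C x)‖ := by simp
      _ ≤ ‖C x‖ := sub_proj_norm_le hPA (C x)
      _ ≤ ‖x‖ := by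
          calc ‖C x‖ ≤ ‖C‖ * ‖x‖ := C.le_opNorm x
            _ ≤ 1 * ‖x‖ := by gcongr
            _ = ‖x‖ := one_mul _
  · intro q hq
    simpa using main q hq
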